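/- Let M be a biclosed poset and A = (U,X,α) a dialectica Lambek space over M. Then the pair δ_! — whose first component is id_U and whose second component sends g : U → List(U → List X) to the function λu. List.join (List.map (λh. h u) (g u)) : U → List X — is a dialectica morphism from !A to !!A, because the ordered product over a flattened list of lists equals the iterated ordered product: (!α)(u, join of the lists) = ((!(!α))(u, g)). -/

import Mathlib

/-- A biclosed poset: a partially ordered monoid with left and right
pseudocomplements adjoint to the multiplication. -/
structure BiclosedPoset (M : Type*) [PartialOrder M] where
  mul : M → M → M
  e : M
  mul_assoc : ∀ a b c, mul (mul a b) c = mul a (mul b c)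
  e_mul : ∀ a, mul e a = a
  mul_e : ∀ a, mul a e = a
  lpc : M → M → M  -- a ⇀ b
  rpc : M → M → M  -- b ↼ a
  lpc_adj : ∀ a b x, mul a x ≤ b ↔ x ≤ lpc a b
  rpc_adj : ∀ a b x, mul x a ≤ b ↔ x ≤ rpc b a

/-- A dialectica Lambek space over `M` is given by sets `U`, `X` and a
relation `α : U × X → M`; a pair `(f, F)` is a dialectica morphism from
`(U, X, α)` to `(V, Y, β)` when `α (u, F y) ≤ β (f u, y)` for all `u`, `y`. -/
def IsDialMorph {M : Type*} [PartialOrder M] {U X V Y : Type*}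
    (α : U × X → M) (β : V × Y → M) (f : U → V) (F : Y → X) : Prop :=
  ∀ u y, α (u, F y) ≤ β (f u, y)

/-- The relation of the of-course modality `!(U,X,α) = (U, U → List X, !α)`,
where `(!α)(u, f)` is the ordered product of `α(u, xᵢ)` over `f u = [x₁,…,xₙ]`
(empty product `e`). -/
def bangRel {M : Type*} [PartialOrder M] (B : BiclosedPoset M)
    {U X : Type*} (α : U × X → M) : U × (U → List X) → M :=
  fun p => ((p.2 p.1).map (fun x => α (p.1, x))).foldr B.mul B.e


private lemma foldr_append_mul {M : Type*} [PartialOrder M] (B : BiclosedPoset M)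
    (l₁ l₂ : List M) :
    (l₁ ++ l₂).foldr B.mul B.e = B.mul (l₁.foldr B.mul B.e) (l₂.foldr B.mul B.e) := by
  induction l₁ with
  | nil => simp [B.e_mul]
  | cons a t ih => simp [ih, B.mul_assoc]

/-- The comultiplication `δ_! : !A → !!A`: the identity together with
`g ↦ λu. List.join (List.map (λh. h u) (g u))` is a dialectica morphism from
`!A` to `!!A`, because the ordered product over a flattened list of lists
equals the iterated ordered product. -/
theorem bang_comult {M : Type*} [PartialOrder M] (B : BiclosedPoset M)
    {U X : Type*} (α : U × X → M) :
    IsDialMorph (bangRel B α) (bangRel B (bangRel B α))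
      (fun u => u)
      (fun g => fun u => List.flatten (List.map (fun h => h u) (g u))) := by
  intro u g
  apply le_of_eq
  simp only [bangRel]
  induction g u with
  | nil => rfl
  | cons h t ih =>
    simp only [List.map_cons, List.flatten_cons, List.map_append, List.foldr_cons,
      foldr_append_mul B, ih]
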